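/- (Lemma 2) For every row index i ∈ Fin m of H_q and every c ∈ V*, the ZMod 2-row space of H_E contains a vector r : Fin n × V* → ZMod 2 that vanishes on all columns (j,c') with c' not a standard unit vector, and whose values on the transmitted columns equal the c-indexed linear combination of the corresponding rows of H_B: r(j, u_e) = Σ_{e' : c(e') = 1} H_B((i,e'),(j,e)) for all j ∈ Fin n and e ∈ Fin b. Thus H_E contains (supported on the transmitted coordinates) all nontrivial linear combinations of the b rows of H_B corresponding to each row of H_q. -/
import Mathlib


open Matrix

lemma zmod2_ne_zero : ∀ {x : ZMod 2}, x ≠ 0 → x = 1 := by decide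

/-- indicator vector of a single column -/
noncomputable def sing {b n : ℕ} (p : Fin n × {v : Fin b → ZMod 2 // v ≠ 0}) :
    (Fin n × {v : Fin b → ZMod 2 // v ≠ 0}) → ZMod 2 := by
  classical exact Pi.single p 1

lemma sing_apply {b n : ℕ} (p q : Fin n × {v : Fin b → ZMod 2 // v ≠ 0}) :
    sing p q = if q = p then 1 else 0 := by
  classical
  rw [sing]
  rw [Pi.single_apply]

lemma zmod2_cancel : ∀ {x y : ZMod 2}, x = x + y → y = 0 := by decide

lemma zmod2_cancel' : ∀ {x y : ZMod 2}, y = x + y → x = 0 := by decide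

lemma zmod2_eq_ite {x : ZMod 2} {P : Prop} [Decidable P] (h : x = 1 ↔ P) :
    x = if P then 1 else 0 := by
  split_ifs with hp
  · exact h.mpr hp
  · by_contra hx
    exact hp (h.mp (zmod2_ne_zero hx))

lemma char2_add_self {α : Type*} (x : (α → ZMod 2)) : x + x = 0 := by
  funext p
  have : ∀ y : ZMod 2, y + y = 0 := by decide
  exact this _

lemma simplex_decomp {b n : ℕ}
    (S : Submodule (ZMod 2) ((Fin n × {v : Fin b → ZMod 2 // v ≠ 0}) → ZMod 2))
    (u : Fin b → {v : Fin b → ZMod 2 // v ≠ 0})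
    (hu : ∀ e : Fin b, (u e : Fin b → ZMod 2) = Pi.single e 1)
    (hrow : ∀ (j : Fin n) (c₁ c₂ c₃ : {v : Fin b → ZMod 2 // v ≠ 0}), c₁ ≠ c₂ →
      (c₃ : Fin b → ZMod 2) = (c₁ : Fin b → ZMod 2) + (c₂ : Fin b → ZMod 2) →
      sing (j, c₁) + sing (j, c₂) + sing (j, c₃) ∈ S)
    (j : Fin n) (d : {v : Fin b → ZMod 2 // v ≠ 0}) :
    sing (j, d) + ∑ e : Fin b, (d : Fin b → ZMod 2) e • sing (j, u e) ∈ S := by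
  classical
  suffices H : ∀ k (d : {v : Fin b → ZMod 2 // v ≠ 0}),
      (Finset.univ.filter fun e => (d : Fin b → ZMod 2) e ≠ 0).card = k →
      sing (j, d) + ∑ e : Fin b, (d : Fin b → ZMod 2) e • sing (j, u e) ∈ S by
    exact H _ d rfl
  intro k
  induction k using Nat.strong_induction_on with
  | _ k ih =>
  intro d hd
  obtain ⟨e, he⟩ : ∃ e, (d : Fin b → ZMod 2) e ≠ 0 := by
    by_contra h
    push_neg at h
    exact d.2 (funext h)
  have hde : (d : Fin b → ZMod 2) e = 1 := zmod2_ne_zero he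
  have hemem : e ∈ Finset.univ.filter fun e => (d : Fin b → ZMod 2) e ≠ 0 := by
    simp [he]
  have hk1 : 1 ≤ k := by
    rw [← hd]
    exact Finset.card_pos.mpr ⟨e, hemem⟩
  rcases eq_or_lt_of_le hk1 with hk | hk
  · -- k = 1 : d is a unit vector
    have hsupp : (Finset.univ.filter fun e' => (d : Fin b → ZMod 2) e' ≠ 0) = {e} := by
      rw [Finset.eq_singleton_iff_unique_mem]
      refine ⟨hemem, fun x hx => ?_⟩
      by_contra hxe
      have : 2 ≤ (Finset.univ.filter fun e' => (d : Fin b → ZMod 2) e' ≠ 0).card :=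
        Finset.one_lt_card.mpr ⟨x, hx, e, hemem, hxe⟩
      omega
    have hdval : (d : Fin b → ZMod 2) = Pi.single e 1 := by
      funext e'
      by_cases h' : e' = e
      · subst h'; rw [hde, Pi.single_eq_same]
      · have : e' ∉ ({e} : Finset (Fin b)) := by simp [h']
        rw [← hsupp] at this
        simp only [Finset.mem_filter, Finset.mem_univ, true_and, not_not] at this
        rw [this, Pi.single_eq_of_ne h']
    have hdu : d = u e := Subtype.ext (by rw [hdval, hu])
    have hsum : ∑ e' : Fin b, (d : Fin b → ZMod 2) e' • sing (j, u e')
        = sing (j, u e) := by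
      rw [Fintype.sum_eq_single e]
      · rw [hde, one_smul]
      · intro e' hne
        rw [hdval, Pi.single_eq_of_ne hne, zero_smul]
    rw [hsum, hdu, char2_add_self]
    exact S.zero_mem
  · -- k ≥ 2
    set d₂ : Fin b → ZMod 2 := (d : Fin b → ZMod 2) + Pi.single e 1 with hd₂def
    have hd₂e : d₂ e = 0 := by
      rw [hd₂def, Pi.add_apply, hde, Pi.single_eq_same]
      decide
    have hd₂ne : ∀ e', e' ≠ e → d₂ e' = (d : Fin b → ZMod 2) e' := by
      intro e' h'
      simp [hd₂def, Pi.single_eq_of_ne h']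
    have hsupp2 : (Finset.univ.filter fun e' => d₂ e' ≠ 0)
        = (Finset.univ.filter fun e' => (d : Fin b → ZMod 2) e' ≠ 0).erase e := by
      ext e'
      by_cases h' : e' = e
      · subst h'
        simp [hd₂e]
      · simp [Finset.mem_erase, h', hd₂ne e' h']
    have hcard2 : (Finset.univ.filter fun e' => d₂ e' ≠ 0).card = k - 1 := by
      rw [hsupp2, Finset.card_erase_of_mem hemem, hd]
    have hd₂0 : d₂ ≠ 0 := by
      intro h0
      have : (Finset.univ.filter fun e' => d₂ e' ≠ 0).card = 0 := by
        rw [h0]; simp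
      omega
    have hne : u e ≠ (⟨d₂, hd₂0⟩ : {v : Fin b → ZMod 2 // v ≠ 0}) := by
      intro h
      have : (u e : Fin b → ZMod 2) e = d₂ e := by rw [h]
      rw [hu, Pi.single_eq_same, hd₂e] at this
      exact one_ne_zero this
    have hdsum : (d : Fin b → ZMod 2)
        = (u e : Fin b → ZMod 2) + ((⟨d₂, hd₂0⟩ : {v : Fin b → ZMod 2 // v ≠ 0}) : Fin b → ZMod 2) := by
      show (d : Fin b → ZMod 2) = (u e : Fin b → ZMod 2) + d₂
      rw [hu, hd₂def]
      funext e'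
      simp only [Pi.add_apply]
      have h3 : ∀ a y : ZMod 2, y = a + (y + a) := by decide
      exact h3 _ _
    have hs := hrow j (u e) ⟨d₂, hd₂0⟩ d hne hdsum
    have hih := ih (k - 1) (by omega) ⟨d₂, hd₂0⟩ hcard2
    have hsplit : ∑ e' : Fin b, (d : Fin b → ZMod 2) e' • sing (j, u e')
        = sing (j, u e) + ∑ e' : Fin b, d₂ e' • sing (j, u e') := by
      have hterm : ∀ e' : Fin b,
          (d : Fin b → ZMod 2) e' • sing (j, u e')
            = (Pi.single e 1 : Fin b → ZMod 2) e' • sing (j, u e') + d₂ e' • sing (j, u e') := by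
        intro e'
        rw [← add_smul]
        congr 1
        rw [hd₂def, Pi.add_apply]
        have h3 : ∀ a y : ZMod 2, y = a + (y + a) := by decide
        exact h3 _ _
      rw [Finset.sum_congr rfl (fun e' _ => hterm e'), Finset.sum_add_distrib]
      congr 1
      rw [Fintype.sum_eq_single e]
      · rw [Pi.single_eq_same, one_smul]
      · intro e' hne'
        rw [Pi.single_eq_of_ne hne', zero_smul]
    have hfinal : sing (j, d) + ∑ e' : Fin b, (d : Fin b → ZMod 2) e' • sing (j, u e')
        = (sing (j, u e) + sing (j, (⟨d₂, hd₂0⟩ : {v : Fin b → ZMod 2 // v ≠ 0})) + sing (j, d))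
          + (sing (j, (⟨d₂, hd₂0⟩ : {v : Fin b → ZMod 2 // v ≠ 0}))
              + ∑ e' : Fin b, d₂ e' • sing (j, u e')) := by
      rw [hsplit]
      have h2 : sing (j, (⟨d₂, hd₂0⟩ : {v : Fin b → ZMod 2 // v ≠ 0}))
          + sing (j, (⟨d₂, hd₂0⟩ : {v : Fin b → ZMod 2 // v ≠ 0})) = 0 := char2_add_self _
      calc sing (j, d) + (sing (j, u e) + ∑ e' : Fin b, d₂ e' • sing (j, u e'))
          = sing (j, d) + (sing (j, u e) + ∑ e' : Fin b, d₂ e' • sing (j, u e')) + 0 := by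
            rw [add_zero]
        _ = sing (j, d) + (sing (j, u e) + ∑ e' : Fin b, d₂ e' • sing (j, u e'))
            + (sing (j, (⟨d₂, hd₂0⟩ : {v : Fin b → ZMod 2 // v ≠ 0}))
                + sing (j, (⟨d₂, hd₂0⟩ : {v : Fin b → ZMod 2 // v ≠ 0}))) := by rw [h2]
        _ = _ := by abel
    rw [hfinal]
    exact S.add_mem hs hih

/-- **Lemma 2.** For every row index `i` of `H_q` and every `c ∈ V*`, the
`ZMod 2`-row space of `H_E` contains a vector `r` that vanishes on all columns `(j, c')`
with `c'` not a standard unit vector, and whose values on the transmitted columns equal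
the `c`-indexed linear combination of the corresponding rows of `H_B`:
`r (j, u_e) = ∑_{e'} c e' * H_B ((i, e'), (j, e))`. -/
theorem extended_image_contains_combinations_of_basic_rows (b m n : ℕ) (hb : 1 ≤ b)
    (ΦB : GaloisField 2 b ≃ₗ[ZMod 2] (Fin b → ZMod 2))
    (Ψm : GaloisField 2 b → Matrix (Fin b) (Fin b) (ZMod 2))
    (hΨm : ∀ (h x : GaloisField 2 b), Ψm h *ᵥ ΦB x = ΦB (h * x))
    (Hq : Matrix (Fin m) (Fin n) (GaloisField 2 b))
    (HB : Matrix (Fin m × Fin b) (Fin n × Fin b) (ZMod 2))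
    (hHB : ∀ (i : Fin m) (e : Fin b) (j : Fin n) (f : Fin b),
      HB (i, e) (j, f) = Ψm (Hq i j) e f)
    (HE : Matrix
      ((Fin m × {v : Fin b → ZMod 2 // v ≠ 0}) ⊕
        (Fin n × {v : Fin b → ZMod 2 // v ≠ 0} × {v : Fin b → ZMod 2 // v ≠ 0}))
      (Fin n × {v : Fin b → ZMod 2 // v ≠ 0}) (ZMod 2))
    (hHPM : ∀ (i : Fin m) (c : {v : Fin b → ZMod 2 // v ≠ 0}) (j : Fin n)
        (c' : {v : Fin b → ZMod 2 // v ≠ 0}),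
      HE (Sum.inl (i, c)) (j, c') = 1 ↔
        (Hq i j ≠ 0 ∧
          (c' : Fin b → ZMod 2) = (Ψm (Hq i j))ᵀ *ᵥ (c : Fin b → ZMod 2)))
    (hHS : ∀ (j₀ : Fin n) (c₁ c₂ : {v : Fin b → ZMod 2 // v ≠ 0}) (j : Fin n)
        (c' : {v : Fin b → ZMod 2 // v ≠ 0}),
      HE (Sum.inr (j₀, c₁, c₂)) (j, c') = 1 ↔
        (j = j₀ ∧ c₁ ≠ c₂ ∧ (c₁ : Fin b → ZMod 2) + (c₂ : Fin b → ZMod 2) ≠ 0 ∧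
          (c' = c₁ ∨ c' = c₂ ∨
            (c' : Fin b → ZMod 2) = (c₁ : Fin b → ZMod 2) + (c₂ : Fin b → ZMod 2))))
    -- the standard unit vectors, as elements of `V*`:
    (u : Fin b → {v : Fin b → ZMod 2 // v ≠ 0})
    (hu : ∀ e : Fin b, (u e : Fin b → ZMod 2) = Pi.single e 1)
    (i : Fin m) (c : {v : Fin b → ZMod 2 // v ≠ 0}) :
    ∃ r ∈ Submodule.span (ZMod 2)
        (Set.range (fun ρ => HE ρ : _ → (Fin n × {v : Fin b → ZMod 2 // v ≠ 0}) → ZMod 2)),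
      (∀ (j : Fin n) (c' : {v : Fin b → ZMod 2 // v ≠ 0}),
        (∀ e : Fin b, c' ≠ u e) → r (j, c') = 0) ∧
      (∀ (j : Fin n) (e : Fin b),
        r (j, u e) = ∑ e' : Fin b, (c : Fin b → ZMod 2) e' * HB (i, e') (j, e)) := by
  classical
  set S : Submodule (ZMod 2) ((Fin n × {v : Fin b → ZMod 2 // v ≠ 0}) → ZMod 2) :=
    Submodule.span (ZMod 2)
      (Set.range (fun ρ => HE ρ : _ → (Fin n × {v : Fin b → ZMod 2 // v ≠ 0}) → ZMod 2))
    with hS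
  -- injectivity of u
  have huinj : ∀ e f : Fin b, u e = u f → e = f := by
    intro e f h
    by_contra hne
    have h1 : (u e : Fin b → ZMod 2) e = (u f : Fin b → ZMod 2) e := by rw [h]
    rw [hu, hu, Pi.single_eq_same, Pi.single_eq_of_ne hne] at h1
    exact one_ne_zero h1
  -- the simplex rows give the hypothesis of simplex_decomp
  have hrow : ∀ (j : Fin n) (c₁ c₂ c₃ : {v : Fin b → ZMod 2 // v ≠ 0}), c₁ ≠ c₂ →
      (c₃ : Fin b → ZMod 2) = (c₁ : Fin b → ZMod 2) + (c₂ : Fin b → ZMod 2) →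
      sing (j, c₁) + sing (j, c₂) + sing (j, c₃) ∈ S := by
    intro j c₁ c₂ c₃ h12 h3
    have hsum0 : (c₁ : Fin b → ZMod 2) + (c₂ : Fin b → ZMod 2) ≠ 0 := h3 ▸ c₃.2
    have h31 : c₃ ≠ c₁ := by
      intro h
      apply c₂.2
      have h4 : (c₁ : Fin b → ZMod 2) = (c₁ : Fin b → ZMod 2) + (c₂ : Fin b → ZMod 2) := by
        rw [← h3, h]
      funext e
      have h5 := congrFun h4 e
      rw [Pi.add_apply] at h5
      exact zmod2_cancel h5
    have h32 : c₃ ≠ c₂ := by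
      intro h
      apply c₁.2
      have h4 : (c₂ : Fin b → ZMod 2) = (c₁ : Fin b → ZMod 2) + (c₂ : Fin b → ZMod 2) := by
        rw [← h3, h]
      funext e
      have h5 := congrFun h4 e
      rw [Pi.add_apply] at h5
      exact zmod2_cancel' h5
    have hval : (fun q => HE (Sum.inr (j, c₁, c₂)) q)
        = sing (j, c₁) + sing (j, c₂) + sing (j, c₃) := by
      funext p
      obtain ⟨j', c'⟩ := p
      have hcol : ((c' : Fin b → ZMod 2) = (c₁ : Fin b → ZMod 2) + (c₂ : Fin b → ZMod 2))
          ↔ c' = c₃ := by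
        rw [← h3, ← Subtype.ext_iff]
      rw [zmod2_eq_ite (hHS j c₁ c₂ j' c')]
      simp only [Pi.add_apply, sing_apply, Prod.mk.injEq, hcol]
      by_cases hj : j' = j
      · subst hj
        have h13 : c₁ ≠ c₃ := Ne.symm h31
        have h23 : c₂ ≠ c₃ := Ne.symm h32
        by_cases h1 : c' = c₁
        · subst h1
          simp [h12, h13, hsum0]
        · by_cases h2 : c' = c₂
          · subst h2
            simp [h12, h23, h1, hsum0]
          · by_cases hcc : c' = c₃
            · subst hcc
              simp [h12, hsum0, h1, h2]
            · simp [h12, hsum0, h1, h2, hcc]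
      · simp [hj]
    have : (fun q => HE (Sum.inr (j, c₁, c₂)) q) ∈ S :=
      Submodule.subset_span ⟨Sum.inr (j, c₁, c₂), rfl⟩
    rwa [hval] at this
  -- the target vector for each j
  set w : Fin n → Fin b → ZMod 2 :=
    fun j => (Ψm (Hq i j))ᵀ *ᵥ (c : Fin b → ZMod 2) with hw
  have hwne : ∀ j : Fin n, Hq i j ≠ 0 → w j ≠ 0 := by
    intro j hj h0
    have hvm : (c : Fin b → ZMod 2) ᵥ* Ψm (Hq i j) = 0 := by
      rw [← Matrix.mulVec_transpose]
      exact h0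
    have hall : ∀ y : GaloisField 2 b, (c : Fin b → ZMod 2) ⬝ᵥ ΦB y = 0 := by
      intro y
      have h1 := hΨm (Hq i j) ((Hq i j)⁻¹ * y)
      rw [← mul_assoc, mul_inv_cancel₀ hj, one_mul] at h1
      rw [← h1, Matrix.dotProduct_mulVec, hvm, zero_dotProduct]
    apply c.2
    funext e
    have h2 := hall (ΦB.symm (Pi.single e 1))
    rw [LinearEquiv.apply_symm_apply, dotProduct_single, mul_one] at h2
    exact h2
  have hw0 : ∀ j : Fin n, Hq i j = 0 → w j = 0 := by
    intro j hj
    have hΨ0 : Ψm (0 : GaloisField 2 b) = 0 := by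
      ext e f
      have h1 := hΨm 0 (ΦB.symm (Pi.single f 1))
      rw [LinearEquiv.apply_symm_apply, zero_mul, map_zero] at h1
      have h2 := congrFun h1 e
      simpa using h2
    rw [hw]
    simp only [hj, hΨ0, Matrix.transpose_zero, Matrix.zero_mulVec]
  -- main computation of w entries
  have hwval : ∀ (j : Fin n) (f : Fin b),
      w j f = ∑ e' : Fin b, (c : Fin b → ZMod 2) e' * HB (i, e') (j, f) := by
    intro j f
    rw [hw]
    simp only [Matrix.mulVec, dotProduct, Matrix.transpose_apply]
    exact Finset.sum_congr rfl fun e' _ => by rw [hHB, mul_comm]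
  set J : Finset (Fin n) := Finset.univ.filter (fun j => Hq i j ≠ 0) with hJ
  set D : Fin n → {v : Fin b → ZMod 2 // v ≠ 0} :=
    fun j => if h : Hq i j ≠ 0 then ⟨w j, hwne j h⟩ else c with hD
  have hDval : ∀ j ∈ J, (D j : Fin b → ZMod 2) = w j := by
    intro j hj
    rw [hJ, Finset.mem_filter] at hj
    rw [hD]
    simp only [dif_pos hj.2]
  -- the pm row
  have hprow : (fun q => HE (Sum.inl (i, c)) q) = ∑ j ∈ J, sing (j, D j) := by
    funext p
    obtain ⟨j', c'⟩ := p
    rw [zmod2_eq_ite (hHPM i c j' c')]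
    rw [Finset.sum_apply]
    by_cases hj' : Hq i j' ≠ 0
    · have hmem : j' ∈ J := by rw [hJ]; simp [hj']
      rw [Finset.sum_eq_single_of_mem j' hmem]
      · rw [sing_apply]
        have : ((c' : Fin b → ZMod 2) = (Ψm (Hq i j'))ᵀ *ᵥ (c : Fin b → ZMod 2))
            ↔ c' = D j' := by
          constructor
          · intro h
            apply Subtype.ext
            rw [hDval j' hmem, hw, h]
          · intro h
            rw [h, hDval j' hmem, hw]
        simp [this, hj']
      · intro j hjJ hne
        rw [sing_apply, if_neg]
        intro h
        exact hne (congrArg Prod.fst h).symm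
    · rw [if_neg (fun h => hj' h.1)]
      symm
      apply Finset.sum_eq_zero
      intro j hjJ
      rw [sing_apply, if_neg]
      intro h
      apply hj'
      have : j' = j := congrArg Prod.fst h
      rw [hJ, Finset.mem_filter] at hjJ
      rw [this]
      exact hjJ.2
  -- the candidate vector
  set r : (Fin n × {v : Fin b → ZMod 2 // v ≠ 0}) → ZMod 2 :=
    ∑ j : Fin n, ∑ e : Fin b, w j e • sing (j, u e) with hr
  refine ⟨r, ?_, ?_, ?_⟩
  · -- membership in the span
    have hcorr : ∀ j ∈ J, sing (j, D j) + ∑ e : Fin b, w j e • sing (j, u e) ∈ S := by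
      intro j hj
      have h1 := simplex_decomp S u hu hrow j (D j)
      rwa [show (∑ e : Fin b, (D j : Fin b → ZMod 2) e • sing (j, u e))
          = ∑ e : Fin b, w j e • sing (j, u e) from
        Finset.sum_congr rfl fun e _ => by rw [hDval j hj]] at h1
    have hmem : (fun q => HE (Sum.inl (i, c)) q)
        + ∑ j ∈ J, (sing (j, D j) + ∑ e : Fin b, w j e • sing (j, u e)) ∈ S := by
      apply Submodule.add_mem
      · exact Submodule.subset_span ⟨Sum.inl (i, c), rfl⟩
      · exact Submodule.sum_mem _ hcorr
    have heq : (fun q => HE (Sum.inl (i, c)) q)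
        + ∑ j ∈ J, (sing (j, D j) + ∑ e : Fin b, w j e • sing (j, u e)) = r := by
      rw [hprow, ← Finset.sum_add_distrib]
      have h1 : ∀ j ∈ J, sing (j, D j) + (sing (j, D j) + ∑ e : Fin b, w j e • sing (j, u e))
          = ∑ e : Fin b, w j e • sing (j, u e) := by
        intro j _
        rw [← add_assoc, char2_add_self, zero_add]
      rw [Finset.sum_congr rfl h1, hr]
      apply Finset.sum_subset (Finset.subset_univ J)
      intro j _ hj
      have hj0 : Hq i j = 0 := by
        by_contra h
        exact hj (by rw [hJ]; simp [h])
      apply Finset.sum_eq_zero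
      intro e _
      rw [hw0 j hj0]
      simp
    rw [← heq]
    exact hmem
  · -- vanishing on non-unit columns
    intro j c' hc'
    rw [hr]
    simp only [Finset.sum_apply, Pi.smul_apply, sing_apply, smul_eq_mul]
    apply Finset.sum_eq_zero
    intro j' _
    apply Finset.sum_eq_zero
    intro e _
    rw [if_neg, mul_zero]
    intro h
    exact hc' e (congrArg Prod.snd h)
  · -- values on unit columns
    intro j f
    rw [hr]
    simp only [Finset.sum_apply, Pi.smul_apply, sing_apply, smul_eq_mul]
    rw [← hwval]
    rw [Finset.sum_eq_single_of_mem j (Finset.mem_univ j)]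
    · rw [Fintype.sum_eq_single f]
      · simp
      · intro e hne
        rw [if_neg, mul_zero]
        intro h
        exact hne (huinj f e (congrArg Prod.snd h)).symm
    · intro j' _ hne
      apply Finset.sum_eq_zero
      intro e _
      rw [if_neg, mul_zero]
      intro h
      exact hne (congrArg Prod.fst h).symm
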